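/- With F̃_{m,a}(n;x) = ∑_{k=0}^{n} C(n,k) * m^k * w_k(x/m) * (-a)^{n-k} (the noncentral Tanny–Dowling polynomials, m ≠ 0), for all natural n and all real m ≠ 0, a, x: x * F̃_{m,a-m}(n;x) = (m+x) * F̃_{m,a}(n;x) - (-a)^n * m. -/

import Mathlib

open Finset

def stirling2 : ℕ → ℕ → ℕ
  | 0, 0 => 1
  | 0, _ + 1 => 0
  | _ + 1, 0 => 0
  | n + 1, k + 1 => (k + 1) * stirling2 n (k + 1) + stirling2 n k

noncomputable def w (n : ℕ) (x : ℝ) : ℝ :=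
  ∑ k ∈ range (n + 1), (k.factorial : ℝ) * (stirling2 n k : ℝ) * x ^ k

noncomputable def Ft (m a : ℝ) (n : ℕ) (x : ℝ) : ℝ :=
  ∑ k ∈ range (n + 1), (n.choose k : ℝ) * m ^ k * w k (x / m) * (-a) ^ (n - k)

/-- number of surjections from an `n`-set onto a `k`-set -/
def Sur (n k : ℕ) : ℕ := k.factorial * stirling2 n k

lemma stirling2_zero_succ (k : ℕ) : stirling2 0 (k + 1) = 0 := rfl

lemma stirling2_eq_zero_of_lt : ∀ n k, n < k → stirling2 n k = 0
  | 0, _ + 1, _ => rfl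
  | n + 1, k + 1, h => by
    show (k + 1) * stirling2 n (k + 1) + stirling2 n k = 0
    rw [stirling2_eq_zero_of_lt n (k + 1) (by omega),
      stirling2_eq_zero_of_lt n k (by omega)]
    simp

lemma sur_succ_zero (n : ℕ) : Sur (n + 1) 0 = 0 := by
  simp [Sur]; rfl

lemma sur_succ_succ (n k : ℕ) :
    Sur (n + 1) (k + 1) = (k + 1) * (Sur n (k + 1) + Sur n k) := by
  show (k + 1).factorial * ((k + 1) * stirling2 n (k + 1) + stirling2 n k) = _
  simp only [Sur, Nat.factorial_succ]
  ring

lemma sur_key : ∀ n, ∀ k, Sur (n + 1) (k + 1)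
    = ∑ j ∈ range (n + 1), (n + 1).choose j * Sur j k := by
  intro n
  induction n with
  | zero =>
    intro k
    rw [sum_range_one]
    simp only [Nat.choose_zero_right, one_mul]
    cases k with
    | zero => rfl
    | succ k =>
      show (k + 2).factorial * ((k + 2) * stirling2 0 (k + 2) + stirling2 0 (k + 1)) = _
      simp [Sur, stirling2_zero_succ]
  | succ n ih =>
    intro k
    have hsplit : ∑ j ∈ range (n + 2), (n + 2).choose j * Sur j k
        = (∑ i ∈ range (n + 1), (n + 1).choose i * Sur (i + 1) k)
          + ((∑ i ∈ range (n + 1), (n + 1).choose i * Sur i k) + Sur (n + 1) k) := by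
      rw [sum_range_succ' (fun j => (n + 2).choose j * Sur j k) (n + 1)]
      have hp : ∀ i, (n + 2).choose (i + 1) = (n + 1).choose i + (n + 1).choose (i + 1) :=
        fun i => Nat.choose_succ_succ (n + 1) i
      simp only [hp, Nat.add_mul, sum_add_distrib]
      have e1 := sum_range_succ' (fun j => (n + 1).choose j * Sur j k) (n + 1)
      have e2 := sum_range_succ (fun j => (n + 1).choose j * Sur j k) (n + 1)
      simp only [Nat.choose_zero_right, Nat.choose_self, one_mul] at e1 e2 ⊢
      omega
    rw [hsplit]
    cases k with
    | zero =>
      rw [sur_succ_succ, ih 0]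
      simp [sur_succ_zero]
    | succ k =>
      rw [sur_succ_succ, ih (k + 1), ih k]
      have hterm : ∀ i ∈ range (n + 1), (n + 1).choose i * Sur (i + 1) (k + 1)
          = (k + 1) * ((n + 1).choose i * Sur i (k + 1))
            + (k + 1) * ((n + 1).choose i * Sur i k) := by
        intro i _
        rw [sur_succ_succ]
        ring
      rw [sum_congr rfl hterm, sum_add_distrib, ← mul_sum, ← mul_sum]
      ring

lemma w_eq_sur (n : ℕ) (y : ℝ) : w n y = ∑ k ∈ range (n + 1), (Sur n k : ℝ) * y ^ k := by
  simp [w, Sur, Nat.cast_mul]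

lemma w_eq_sur' (n N : ℕ) (h : n < N) (y : ℝ) :
    w n y = ∑ k ∈ range N, (Sur n k : ℝ) * y ^ k := by
  rw [w_eq_sur]
  refine sum_subset (range_subset_range.mpr (by omega)) ?_
  intro k _ hk
  simp only [mem_range, not_lt] at hk
  rw [Sur, stirling2_eq_zero_of_lt n k (by omega)]
  simp

lemma w_zero (y : ℝ) : w 0 y = 1 := by
  simp [w]; rfl

lemma w_succ (n : ℕ) (y : ℝ) :
    w (n + 1) y = y * ∑ j ∈ range (n + 1), ((n + 1).choose j : ℝ) * w j y := by
  rw [w_eq_sur, sum_range_succ' (fun k => (Sur (n + 1) k : ℝ) * y ^ k) (n + 1)]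
  rw [sur_succ_zero]
  simp only [Nat.cast_zero, zero_mul, pow_zero, mul_one, add_zero]
  have hterm : ∀ k ∈ range (n + 1), (Sur (n + 1) (k + 1) : ℝ) * y ^ (k + 1)
      = y * ∑ j ∈ range (n + 1), ((n + 1).choose j : ℝ) * ((Sur j k : ℝ) * y ^ k) := by
    intro k _
    rw [sur_key n k]
    push_cast
    rw [sum_mul, mul_sum]
    refine sum_congr rfl fun j _ => ?_
    ring
  rw [sum_congr rfl hterm, ← mul_sum, sum_comm]
  congr 1
  refine sum_congr rfl fun j hj => ?_
  rw [← mul_sum, ← w_eq_sur' j (n + 1) (mem_range.mp hj) y]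

lemma binom_conv (f : ℕ → ℝ) (b c : ℝ) (n : ℕ) :
    ∑ k ∈ range (n + 1), (n.choose k : ℝ) * f k * (b + c) ^ (n - k)
      = ∑ j ∈ range (n + 1), (n.choose j : ℝ)
          * (∑ k ∈ range (j + 1), (j.choose k : ℝ) * f k * b ^ (j - k)) * c ^ (n - j) := by
  have hext : ∀ j ∈ range (n + 1),
      (n.choose j : ℝ) * (∑ k ∈ range (j + 1), (j.choose k : ℝ) * f k * b ^ (j - k)) * c ^ (n - j)
      = ∑ k ∈ range (n + 1),
          (n.choose j : ℝ) * ((j.choose k : ℝ) * f k * b ^ (j - k)) * c ^ (n - j) := by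
    intro j hj
    rw [mul_sum, sum_mul]
    refine sum_subset (range_subset_range.mpr (by have := mem_range.mp hj; omega)) ?_
    intro k _ hk
    simp only [mem_range, not_lt] at hk
    rw [Nat.choose_eq_zero_of_lt (show j < k by omega)]
    simp
  rw [sum_congr rfl hext, sum_comm]
  refine sum_congr rfl fun k hk => ?_
  have hkn : k ≤ n := by have := mem_range.mp hk; omega
  have hres : ∑ j ∈ range (n + 1),
        (n.choose j : ℝ) * ((j.choose k : ℝ) * f k * b ^ (j - k)) * c ^ (n - j)
      = ∑ j ∈ Ico k (n + 1),
        (n.choose j : ℝ) * ((j.choose k : ℝ) * f k * b ^ (j - k)) * c ^ (n - j) := by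
    refine (sum_subset (fun j hj => ?_) ?_).symm
    · rw [mem_Ico] at hj; exact mem_range.mpr hj.2
    · intro j hj hj'
      rw [mem_Ico, not_and, not_lt] at hj'
      have hjk : j < k := by
        by_contra hcon
        exact absurd (mem_range.mp hj) (not_lt.mpr (hj' (not_lt.mp hcon)))
      rw [Nat.choose_eq_zero_of_lt hjk]
      simp
  rw [hres, sum_Ico_eq_sum_range, show n + 1 - k = (n - k) + 1 from by omega,
    add_pow b c (n - k), mul_sum]
  refine sum_congr rfl fun i hi => ?_
  have hin : i ≤ n - k := by have := mem_range.mp hi; omega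
  have hc : (n.choose (k + i) : ℝ) * ((k + i).choose k : ℝ)
      = (n.choose k : ℝ) * ((n - k).choose i : ℝ) := by
    have := Nat.choose_mul (n := n) (k := k + i) (s := k) (by omega)
    rw [show k + i - k = i from by omega] at this
    exact_mod_cast this
  rw [show k + i - k = i from by omega, show n - (k + i) = n - k - i from by omega]
  linear_combination (-(f k * b ^ i * c ^ (n - k - i))) * hc

theorem stmt5 (n : ℕ) (m a x : ℝ) (hm : m ≠ 0) :
    x * Ft m (a - m) n x = (m + x) * Ft m a n x - (-a) ^ n * m := by
  have key : ∀ j : ℕ,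
      x * (∑ k ∈ range (j + 1), (j.choose k : ℝ) * (m ^ k * w k (x / m)) * m ^ (j - k))
      = (m + x) * (m ^ j * w j (x / m)) - (if j = 0 then m else 0) := by
    intro j
    cases j with
    | zero => simp [w_zero]
    | succ j =>
      have hpow : ∀ k ∈ range (j + 2),
          ((j + 1).choose k : ℝ) * (m ^ k * w k (x / m)) * m ^ (j + 1 - k)
          = m ^ (j + 1) * (((j + 1).choose k : ℝ) * w k (x / m)) := by
        intro k hk
        have hmm : m ^ k * m ^ (j + 1 - k) = m ^ (j + 1) := by
          rw [← pow_add]; congr 1; have := mem_range.mp hk; omega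
        calc ((j + 1).choose k : ℝ) * (m ^ k * w k (x / m)) * m ^ (j + 1 - k)
            = (m ^ k * m ^ (j + 1 - k)) * (((j + 1).choose k : ℝ) * w k (x / m)) := by ring
          _ = m ^ (j + 1) * (((j + 1).choose k : ℝ) * w k (x / m)) := by rw [hmm]
      rw [sum_congr rfl hpow, ← mul_sum, sum_range_succ]
      have hx : x * ∑ k ∈ range (j + 1), ((j + 1).choose k : ℝ) * w k (x / m)
          = m * w (j + 1) (x / m) := by
        rw [w_succ j (x / m)]
        field_simp
      simp only [Nat.choose_self, Nat.cast_one, one_mul, Nat.succ_ne_zero, if_false]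
      linear_combination (m ^ (j + 1)) * hx
  have step1 : x * Ft m (a - m) n x
      = ∑ j ∈ range (n + 1), (n.choose j : ℝ)
          * ((m + x) * (m ^ j * w j (x / m)) - (if j = 0 then m else 0)) * (-a) ^ (n - j) := by
    unfold Ft
    have e1 : ∑ k ∈ range (n + 1), (n.choose k : ℝ) * m ^ k * w k (x / m) * (-(a - m)) ^ (n - k)
        = ∑ k ∈ range (n + 1), (n.choose k : ℝ) * (m ^ k * w k (x / m)) * (m + -a) ^ (n - k) := by
      refine sum_congr rfl fun k _ => ?_
      rw [show -(a - m) = m + -a from by ring]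
      ring
    rw [e1, binom_conv (fun k => m ^ k * w k (x / m)) m (-a) n, mul_sum]
    refine sum_congr rfl fun j _ => ?_
    rw [← key j]
    ring
  rw [step1]
  have split : ∀ j ∈ range (n + 1), (n.choose j : ℝ)
        * ((m + x) * (m ^ j * w j (x / m)) - (if j = 0 then m else 0)) * (-a) ^ (n - j)
      = (m + x) * ((n.choose j : ℝ) * m ^ j * w j (x / m) * (-a) ^ (n - j))
        - (n.choose j : ℝ) * (if j = 0 then m else 0) * (-a) ^ (n - j) := by
    intro j _
    ring
  rw [sum_congr rfl split, sum_sub_distrib, ← mul_sum]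
  have hz : ∑ j ∈ range (n + 1), (n.choose j : ℝ) * (if j = 0 then m else 0) * (-a) ^ (n - j)
      = (-a) ^ n * m := by
    rw [sum_eq_single_of_mem 0 (mem_range.mpr (by omega))]
    · simp [mul_comm]
    · intro j _ hj0
      simp [hj0]
  rw [hz]
  rfl
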